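/- Let F : ℝ^d → ℝ^d be a lift of a homeomorphism f of the d-torus homotopic to the identity, let v ∈ ℝ^d \ {0}, and let μ be an ergodic f-invariant Borel probability measure on T^d with rotation vector ρ_μ = ∫_{T^d} (F(z) − z) dμ(z). Then there is no constant s > 0 with the property that for μ-almost every z there exists a positive integer n_z with ⟨F^{n_z}(z̃) − z̃ − n_z ρ_μ, v⟩ ≥ s·n_z (where z̃ is any lift of z; this quantity is independent of the lift). -/

import Mathlib

noncomputable section
open Filter Topology Metric Set MeasureTheory

/-- Euclidean space `ℝ^d`. -/
abbrev E (d : ℕ) := EuclideanSpace ℝ (Fin d)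

/-- The integer lattice `ℤ^d` as an additive subgroup of `ℝ^d`. -/
def ZLat (d : ℕ) : AddSubgroup (E d) where
  carrier := {z | ∀ i, ∃ m : ℤ, z i = (m : ℝ)}
  zero_mem' := fun i => ⟨0, by simp⟩
  add_mem' := by
    intro x y hx hy i
    obtain ⟨m, hm⟩ := hx i
    obtain ⟨n, hn⟩ := hy i
    exact ⟨m + n, by simp [PiLp.add_apply, hm, hn]⟩
  neg_mem' := by
    intro x hx i
    obtain ⟨m, hm⟩ := hx i
    exact ⟨-m, by simp [PiLp.neg_apply, hm]⟩

/-- The torus `T^d = ℝ^d / ℤ^d`. -/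
abbrev T (d : ℕ) := E d ⧸ ZLat d

/-- The canonical projection `π : ℝ^d → T^d`. -/
def tpi (d : ℕ) : E d → T d := QuotientAddGroup.mk

/-- The set of rotation vectors of orbit segments starting in `W ⊆ ℝ^d`:
`{ρ | ∃ nᵢ → ∞, zᵢ ∈ W, (F^{nᵢ}(zᵢ) - zᵢ)/nᵢ → ρ}`. -/
def rotRel {d : ℕ} (F : E d → E d) (W : Set (E d)) : Set (E d) :=
  {ρ | ∃ (n : ℕ → ℕ) (z : ℕ → E d),
    Tendsto n atTop atTop ∧ (∀ i, z i ∈ W) ∧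
    Tendsto (fun i => (n i : ℝ)⁻¹ • (F^[n i] (z i) - z i)) atTop (𝓝 ρ)}

/-- The Misiurewicz–Ziemian rotation set `ρ(F)` of a lift `F`. -/
def rotSet {d : ℕ} (F : E d → E d) : Set (E d) := rotRel F Set.univ

/-- The rotation subset `ρ_U(F)` for `U ⊆ T^d` (starting points in `π⁻¹(U)`). -/
def rotU {d : ℕ} (F : E d → E d) (U : Set (T d)) : Set (E d) :=
  rotRel F (tpi d ⁻¹' U)

/-- `F` is a lift of the torus homeomorphism `f` (which is then homotopic to the
identity, as expressed by commutation with the deck translations). -/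
def IsLift {d : ℕ} (F : E d ≃ₜ E d) (f : T d ≃ₜ T d) : Prop :=
  (∀ z : E d, tpi d (F z) = f (tpi d z)) ∧ ∀ z : E d, ∀ m ∈ ZLat d, F (z + m) = F z + m

/-- `U ⊆ T^d` is bounded: the connected components of `π⁻¹(U)` are bounded. -/
def BoundedSet {d : ℕ} (U : Set (T d)) : Prop :=
  ∀ z ∈ tpi d ⁻¹' U, Bornology.IsBounded (connectedComponentIn (tpi d ⁻¹' U) z)

/-- `U ⊆ T^d` is recurrent: `f^n(U) ∩ U ≠ ∅` for infinitely many `n ≥ 1`. -/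
def Recurrent {d : ℕ} (f : T d ≃ₜ T d) (U : Set (T d)) : Prop :=
  {n : ℕ | 1 ≤ n ∧ ((⇑f)^[n] '' U ∩ U).Nonempty}.Infinite

instance (d : ℕ) : MeasurableSpace (T d) := borel _
instance (d : ℕ) : BorelSpace (T d) := ⟨rfl⟩

/-! ### Auxiliary lemmas -/

lemma tpi_continuous (d : ℕ) : Continuous (tpi d) := QuotientAddGroup.continuous_mk

instance compactSpace_T (d : ℕ) : CompactSpace (T d) := by
  constructor
  have hsub : (Set.univ : Set (T d)) ⊆ tpi d '' Metric.closedBall 0 (d + 1) := by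
    rintro x -
    obtain ⟨z, rfl⟩ := QuotientAddGroup.mk_surjective x
    obtain ⟨m, hmi, hmem⟩ : ∃ m : E d, (∀ i, m i = ((⌊z i⌋ : ℤ) : ℝ)) ∧ m ∈ ZLat d :=
      ⟨(WithLp.toLp 2 (fun i => ((⌊z i⌋ : ℤ) : ℝ)) : E d), fun i => rfl, fun i => ⟨⌊z i⌋, rfl⟩⟩
    refine ⟨z - m, ?_, ?_⟩
    · rw [Metric.mem_closedBall, dist_zero_right]
      have h1 : ‖z - m‖ = Real.sqrt (∑ i, ‖(z - m) i‖ ^ 2) := EuclideanSpace.norm_eq _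
      have h2 : (∑ i, ‖(z - m) i‖ ^ 2) ≤ ((d : ℝ) + 1) ^ 2 := by
        calc (∑ i, ‖(z - m) i‖ ^ 2) ≤ ∑ _i : Fin d, (1 : ℝ) := by
              refine Finset.sum_le_sum fun i _ => ?_
              have hzi : (z - m) i = Int.fract (z i) := by
                rw [PiLp.sub_apply, hmi i, Int.fract]
              rw [hzi, Real.norm_eq_abs, abs_of_nonneg (Int.fract_nonneg _)]
              nlinarith [Int.fract_nonneg (z i), Int.fract_lt_one (z i)]
          _ = (d : ℝ) := by simp
          _ ≤ ((d : ℝ) + 1) ^ 2 := by nlinarith [Nat.cast_nonneg (α := ℝ) d]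
      rw [h1]
      calc Real.sqrt (∑ i, ‖(z - m) i‖ ^ 2) ≤ Real.sqrt (((d : ℝ) + 1) ^ 2) :=
            Real.sqrt_le_sqrt h2
        _ = (d : ℝ) + 1 := Real.sqrt_sq (by positivity)
    · show tpi d (z - m) = QuotientAddGroup.mk z
      have hmem' : -(z - m) + z ∈ ZLat d := by
        have : -(z - m) + z = m := by abel
        rw [this]; exact hmem
      exact (QuotientAddGroup.eq (s := ZLat d)).mpr hmem'
  have huniv : (Set.univ : Set (T d)) = tpi d '' Metric.closedBall 0 (d + 1) :=
    le_antisymm hsub (Set.subset_univ _)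
  rw [huniv]
  exact (isCompact_closedBall _ _).image (tpi_continuous d)

lemma integrable_of_continuous {X Y : Type*} [TopologicalSpace X] [CompactSpace X]
    [MeasurableSpace X] [OpensMeasurableSpace X] [NormedAddCommGroup Y]
    [SecondCountableTopology Y]
    {μ : Measure X} [IsFiniteMeasure μ] {h : X → Y} (hc : Continuous h) :
    Integrable h μ := by
  obtain ⟨C, hC⟩ := isCompact_univ.exists_bound_of_continuousOn hc.continuousOn
  exact (integrable_const C).mono' hc.aestronglyMeasurable (ae_of_all _ fun x => hC x trivial)

/-- Running maximum `max (S₁ g, …, S_{N+1} g)` of Birkhoff sums. -/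
def maxBirk {X : Type*} (T : X → X) (g : X → ℝ) : ℕ → X → ℝ
  | 0 => birkhoffSum T g 1
  | (N + 1) => fun x => max (maxBirk T g N x) (birkhoffSum T g (N + 2) x)

lemma birk_le_maxBirk {X : Type*} (T : X → X) (g : X → ℝ) :
    ∀ N n, n ≤ N → ∀ x, birkhoffSum T g (n + 1) x ≤ maxBirk T g N x := by
  intro N
  induction N with
  | zero => intro n hn x; interval_cases n; exact le_rfl
  | succ N ih =>
    intro n hn x
    rcases Nat.lt_succ_iff_lt_or_eq.mp (Nat.lt_succ_of_le hn) with h | h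
    · exact (ih n (Nat.lt_succ_iff.mp h) x).trans (le_max_left _ _)
    · subst h; exact le_max_right _ _

lemma maxBirk_exists {X : Type*} (T : X → X) (g : X → ℝ) (N : ℕ) (x : X) :
    ∃ n ≤ N, maxBirk T g N x = birkhoffSum T g (n + 1) x := by
  induction N with
  | zero => exact ⟨0, le_rfl, rfl⟩
  | succ N ih =>
    obtain ⟨n, hn, he⟩ := ih
    rcases le_total (maxBirk T g N x) (birkhoffSum T g (N + 2) x) with h | h
    · exact ⟨N + 1, le_rfl, max_eq_right h⟩
    · exact ⟨n, hn.trans (Nat.le_succ N), by rw [← he]; exact max_eq_left h⟩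

lemma maxBirk_mono {X : Type*} (T : X → X) (g : X → ℝ) (x : X) :
    Monotone fun N => maxBirk T g N x :=
  monotone_nat_of_le_succ fun N => le_max_left _ _

lemma maxBirk_key {X : Type*} (T : X → X) (g : X → ℝ) (N : ℕ) (x : X) :
    maxBirk T g N x ≤ g x + max 0 (maxBirk T g N (T x)) := by
  obtain ⟨n, hn, he⟩ := maxBirk_exists T g N x
  rw [he, birkhoffSum_succ']
  refine add_le_add le_rfl ?_
  cases n with
  | zero => simp [birkhoffSum_zero]
  | succ m =>
    exact (birk_le_maxBirk T g N m (Nat.le_of_succ_le hn) (T x)).trans (le_max_right _ _)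

lemma birkhoffSum_measurable {X : Type*} [MeasurableSpace X] {T : X → X} {g : X → ℝ}
    (hT : Measurable T) (hg : Measurable g) (n : ℕ) :
    Measurable (birkhoffSum T g n) := by
  show Measurable fun x => ∑ k ∈ Finset.range n, g (T^[k] x)
  exact Finset.measurable_sum _ fun k _ => hg.comp (hT.iterate k)

lemma birkhoffSum_integrable {X : Type*} [MeasurableSpace X] {μ : Measure X}
    {T : X → X} {g : X → ℝ} (hT : MeasurePreserving T μ μ) (hg : Integrable g μ) (n : ℕ) :
    Integrable (birkhoffSum T g n) μ := by
  show Integrable (fun x => ∑ k ∈ Finset.range n, g (T^[k] x)) μ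
  refine integrable_finset_sum _ fun k _ => ?_
  exact ((hT.iterate k).integrable_comp hg.aestronglyMeasurable).mpr hg

lemma maxBirk_measurable {X : Type*} [MeasurableSpace X] {T : X → X} {g : X → ℝ}
    (hT : Measurable T) (hg : Measurable g) (N : ℕ) :
    Measurable (maxBirk T g N) := by
  induction N with
  | zero => exact birkhoffSum_measurable hT hg 1
  | succ N ih => exact ih.max (birkhoffSum_measurable hT hg (N + 2))

lemma maxBirk_integrable {X : Type*} [MeasurableSpace X] {μ : Measure X}
    {T : X → X} {g : X → ℝ} (hT : MeasurePreserving T μ μ) (hg : Integrable g μ) (N : ℕ) :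
    Integrable (maxBirk T g N) μ := by
  induction N with
  | zero => exact birkhoffSum_integrable hT hg 1
  | succ N ih =>
    have := ih.sup (birkhoffSum_integrable hT hg (N + 2))
    simpa [Pi.sup_def, maxBirk] using this

/-- **Maximal ergodic theorem** (Garsia's proof). -/
theorem maxErgodic {X : Type*} [MeasurableSpace X] {μ : Measure X} [IsFiniteMeasure μ]
    {T : X → X} (hT : MeasurePreserving T μ μ) {g : X → ℝ}
    (hgm : Measurable g) (hgi : Integrable g μ) :
    0 ≤ ∫ x in {x | ∃ n : ℕ, 0 < birkhoffSum T g (n + 1) x}, g x ∂μ := by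
  set A : ℕ → Set X := fun N => {x | 0 < maxBirk T g N x} with hA
  have hAm : ∀ N, MeasurableSet (A N) := fun N =>
    measurableSet_lt measurable_const (maxBirk_measurable hT.measurable hgm N)
  have hAmono : Monotone A := by
    intro N N' hNN' x hx
    exact lt_of_lt_of_le hx (maxBirk_mono T g x hNN')
  have hAU : (⋃ N, A N) = {x | ∃ n : ℕ, 0 < birkhoffSum T g (n + 1) x} := by
    ext x
    simp only [Set.mem_iUnion, Set.mem_setOf_eq, hA]
    constructor
    · rintro ⟨N, hN⟩
      obtain ⟨n, _, he⟩ := maxBirk_exists T g N x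
      exact ⟨n, he ▸ hN⟩
    · rintro ⟨n, hn⟩
      exact ⟨n, lt_of_lt_of_le hn (birk_le_maxBirk T g n n le_rfl x)⟩
  have hN : ∀ N, 0 ≤ ∫ x in A N, g x ∂μ := by
    intro N
    set p : X → ℝ := fun x => max 0 (maxBirk T g N x) with hp
    have hpi : Integrable p μ := by
      have := (maxBirk_integrable hT hgi N).pos_part
      simpa [hp, max_comm] using this
    have hpTi : Integrable (fun x => p (T x)) μ :=
      (hT.integrable_comp hpi.aestronglyMeasurable).mpr hpi
    have hqi : Integrable (fun x => p x - p (T x)) μ := hpi.sub hpTi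
    have key : ∀ x ∈ A N, p x - p (T x) ≤ g x := by
      intro x hx
      have h1 : p x = maxBirk T g N x := max_eq_right (le_of_lt hx)
      have h2 := maxBirk_key T g N x
      rw [h1]; simp only [hp] at h2 ⊢; linarith
    have h0 : (0 : ℝ) = ∫ x, (p x - p (T x)) ∂μ := by
      rw [integral_sub hpi hpTi]
      have hmap : ∫ x, p (T x) ∂μ = ∫ x, p x ∂μ := by
        conv_rhs => rw [← hT.map_eq]
        rw [integral_map hT.measurable.aemeasurable]
        rw [hT.map_eq]
        exact hpi.aestronglyMeasurable
      rw [hmap, sub_self]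
    have h2 : ∫ x in (A N)ᶜ, (p x - p (T x)) ∂μ ≤ 0 := by
      refine setIntegral_nonpos (hAm N).compl fun x hx => ?_
      have hx' : ¬ (0 < maxBirk T g N x) := hx
      have h3 : p x = 0 := max_eq_left (not_lt.1 hx')
      have h4 : 0 ≤ p (T x) := le_max_left _ _
      linarith
    have h5 := integral_add_compl (hAm N) hqi
    have h6 : ∫ x, (p x - p (T x)) ∂μ ≤ ∫ x in A N, (p x - p (T x)) ∂μ := by
      rw [← h5]; linarith
    have h7 : ∫ x in A N, (p x - p (T x)) ∂μ ≤ ∫ x in A N, g x ∂μ :=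
      setIntegral_mono_on hqi.integrableOn hgi.integrableOn (hAm N) key
    linarith
  have hU := tendsto_setIntegral_of_monotone hAm hAmono hgi.integrableOn
  rw [← hAU]
  exact ge_of_tendsto' hU hN



/-- **Lemma (no uniform drift for ergodic measures).**
If `μ` is an ergodic `f`-invariant Borel probability measure with rotation vector
`ρ_μ = ∫ (F - id) dμ`, then there is no `s > 0` such that for `μ`-a.e. `z` some
iterate `n_z ≥ 1` satisfies `⟨F^{n_z}(z̃) - z̃ - n_z ρ_μ, v⟩ ≥ s n_z` (for every
lift `z̃` of `z`). -/
theorem no_uniform_deviation_drift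
    {d : ℕ} (F : E d ≃ₜ E d) (f : T d ≃ₜ T d) (hlift : IsLift F f)
    (v : E d) (hv : v ≠ 0)
    (μ : Measure (T d)) (hprob : IsProbabilityMeasure μ) (herg : Ergodic (⇑f) μ)
    (φ : T d → E d) (hφcont : Continuous φ)
    (hφ : ∀ z : E d, φ (tpi d z) = F z - z) :
    ¬ ∃ s : ℝ, 0 < s ∧ ∀ᵐ z ∂μ, ∃ n : ℕ, 0 < n ∧ ∀ zt : E d, tpi d zt = z →
        s * n ≤ (inner ℝ ((⇑F)^[n] zt - zt - (n : ℝ) • (∫ w, φ w ∂μ)) v : ℝ) := by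
    rintro ⟨s, hs, hae⟩
    haveI := hprob
    haveI : IsFiniteMeasure μ := ⟨by rw [measure_univ]; exact ENNReal.one_lt_top⟩
    set ρ : E d := ∫ w, φ w ∂μ with hρ
    have hφi : Integrable φ μ := integrable_of_continuous hφcont
    set c : ℝ := (inner ℝ ρ v : ℝ) + s / 2 with hc
    set g : T d → ℝ := fun w => (inner ℝ (φ w) v : ℝ) - c with hgdef
    have hgc : Continuous g := (hφcont.inner continuous_const).sub continuous_const
    have hgm : Measurable g := hgc.measurable
    have hgi : Integrable g μ := integrable_of_continuous hgc
    have hmp : MeasurePreserving (⇑f) μ μ := herg.toMeasurePreserving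
    have hgsum : ∀ (n : ℕ) (x : T d),
        birkhoffSum (⇑f) g n x = (inner ℝ (birkhoffSum (⇑f) φ n x) v : ℝ) - n * c := by
      intro n x
      show (∑ k ∈ Finset.range n, g ((⇑f)^[k] x))
          = (inner ℝ (∑ k ∈ Finset.range n, φ ((⇑f)^[k] x)) v : ℝ) - n * c
      rw [sum_inner]
      simp only [hgdef]
      rw [Finset.sum_sub_distrib, Finset.sum_const, Finset.card_range, nsmul_eq_mul]
    have hit : ∀ (n : ℕ) (z : E d), tpi d ((⇑F)^[n] z) = (⇑f)^[n] (tpi d z) := by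
      intro n
      induction n with
      | zero => intro z; simp
      | succ n ih =>
        intro z
        rw [Function.iterate_succ_apply', Function.iterate_succ_apply', hlift.1, ih]
    have hsum : ∀ (n : ℕ) (z : E d), (⇑F)^[n] z - z = birkhoffSum (⇑f) φ n (tpi d z) := by
      intro n
      induction n with
      | zero => intro z; simp [birkhoffSum_zero]
      | succ n ih =>
        intro z
        rw [Function.iterate_succ_apply', birkhoffSum_succ, ← ih z, ← hit n z, hφ]
        abel
    have hae2 : ∀ᵐ z ∂μ, z ∈ {x : T d | ∃ n : ℕ, 0 < birkhoffSum (⇑f) g (n + 1) x} := by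
      filter_upwards [hae] with z hz
      obtain ⟨n, hn, hineq⟩ := hz
      obtain ⟨zt, hzt⟩ := QuotientAddGroup.mk_surjective z
      have hzt' : tpi d zt = z := hzt
      have h2 := hineq zt hzt'
      rw [hsum n zt, hzt'] at h2
      rw [inner_sub_left, real_inner_smul_left] at h2
      refine ⟨n - 1, ?_⟩
      have hn1 : n - 1 + 1 = n := Nat.succ_pred_eq_of_pos hn
      rw [hn1, hgsum n z]
      have hn' : (1 : ℝ) ≤ (n : ℝ) := by exact_mod_cast hn
      simp only [hc]
      nlinarith
    have hAmeas : MeasurableSet {x : T d | ∃ n : ℕ, 0 < birkhoffSum (⇑f) g (n + 1) x} := by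
      have hAeq : {x : T d | ∃ n : ℕ, 0 < birkhoffSum (⇑f) g (n + 1) x}
          = ⋃ n : ℕ, {x | 0 < birkhoffSum (⇑f) g (n + 1) x} := by
        ext x; simp
      rw [hAeq]
      exact MeasurableSet.iUnion fun n =>
        measurableSet_lt measurable_const
          (birkhoffSum_measurable f.continuous.measurable hgm (n + 1))
    have hAc : μ {x : T d | ∃ n : ℕ, 0 < birkhoffSum (⇑f) g (n + 1) x}ᶜ = 0 :=
      ae_iff.mp hae2
    have hA := maxErgodic hmp hgm hgi
    have hIA : ∫ x in {x : T d | ∃ n : ℕ, 0 < birkhoffSum (⇑f) g (n + 1) x}, g x ∂μ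
        = ∫ x, g x ∂μ := by
      have h5 := integral_add_compl hAmeas hgi
      have h6 : ∫ x in {x : T d | ∃ n : ℕ, 0 < birkhoffSum (⇑f) g (n + 1) x}ᶜ, g x ∂μ = 0 := by
        rw [Measure.restrict_eq_zero.mpr hAc, integral_zero_measure]
      linarith
    have hint : ∫ x, g x ∂μ = -(s / 2) := by
      have hψi : Integrable (fun w => (inner ℝ (φ w) v : ℝ)) μ :=
        integrable_of_continuous (hφcont.inner continuous_const)
      have h1 : ∫ w, (inner ℝ (φ w) v : ℝ) ∂μ = (inner ℝ ρ v : ℝ) := by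
        have h2 := integral_inner (𝕜 := ℝ) hφi v
        calc ∫ w, (inner ℝ (φ w) v : ℝ) ∂μ = ∫ w, (inner ℝ v (φ w) : ℝ) ∂μ := by
              simp_rw [real_inner_comm]
          _ = (inner ℝ v ρ : ℝ) := h2
          _ = (inner ℝ ρ v : ℝ) := real_inner_comm _ _
      rw [show g = fun w => (inner ℝ (φ w) v : ℝ) - c from rfl]
      rw [integral_sub hψi (integrable_const c), h1, integral_const, probReal_univ,
        one_smul, hc]
      ring
    rw [hIA, hint] at hA
    linarith
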